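/- Let a and b be integers with 1 ≤ a < b. If M is a finite matroid that is C(b, a)-thick (where C(b, a) is the binomial coefficient) and r(M) > a, then M has a minor isomorphic to U_{a+1,b}. -/

import Mathlib

open Set
open scoped Classical

namespace Matroid

variable {α β : Type*}

/-- The rank of a set `X` in a matroid `M`: the maximum size of an independent subset of `X`
(appropriate for finite matroids). -/
noncomputable def rk (M : Matroid α) (X : Set α) : ℕ :=
  sSup {n | ∃ I, I ⊆ X ∧ M.Indep I ∧ I.ncard = n}

/-- The rank `r(M)` of a matroid `M`. -/
noncomputable def rank (M : Matroid α) : ℕ := M.rk M.E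

/-- The deletion `M \ D` of a set `D` from `M`. -/
def delete' (M : Matroid α) (D : Set α) : Matroid α := M ↾ (M.E \ D)

/-- The contraction `M / C` of a set `C` in `M`, defined via duality. -/
def contract' (M : Matroid α) (C : Set α) : Matroid α := (M✶.delete' C)✶

/-- `N` is a minor of `M`, i.e. `N = M / C \ D` for some sets `C` and `D`. -/
def IsMinor' (N M : Matroid α) : Prop := ∃ C D : Set α, (M.contract' C).delete' D = N

/-- An isomorphism between matroids, possibly on different ground types. -/
def IsIso (M : Matroid α) (N : Matroid β) : Prop :=
  ∃ e : M.E ≃ N.E, ∀ I : Set M.E, M.Indep ((↑) '' I) ↔ N.Indep ((↑) '' (e '' I))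

/-- `N` is isomorphic to the uniform matroid `U_{k,n}`: the ground set has `n` elements and
the independent sets are exactly the subsets with at most `k` elements. -/
def IsUnif (N : Matroid α) (k n : ℕ) : Prop :=
  N.E.Finite ∧ N.E.ncard = n ∧ ∀ I ⊆ N.E, (N.Indep I ↔ I.ncard ≤ k)

/-- `M` has a minor isomorphic to `U_{k,n}`. -/
def HasUnifMinor (M : Matroid α) (k n : ℕ) : Prop :=
  ∃ N : Matroid α, N.IsMinor' M ∧ N.IsUnif k n

/-- `τ_a(M)`: the minimum size of a collection of subsets of `E(M)`, each of rank at most `a`,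
whose union is `E(M)`. -/
noncomputable def tau (M : Matroid α) (a : ℕ) : ℕ :=
  sInf {n | ∃ 𝒞 : Finset (Set α),
    𝒞.card = n ∧ (∀ X ∈ 𝒞, X ⊆ M.E ∧ M.rk X ≤ a) ∧ M.E ⊆ ⋃₀ ↑𝒞}

/-- `M` is `d`-thick: every collection of sets, each of rank less than `r(M)`, whose union
is `E(M)`, has at least `d` members. -/
def Thick (M : Matroid α) (d : ℕ) : Prop :=
  ∀ 𝒞 : Finset (Set α), (∀ X ∈ 𝒞, X ⊆ M.E ∧ M.rk X < M.rank) → M.E ⊆ ⋃₀ ↑𝒞 → d ≤ 𝒞.card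

/-- A set `X` is `d`-thick in `M` if the restriction `M|X` is `d`-thick. -/
def ThickIn (M : Matroid α) (d : ℕ) (X : Set α) : Prop := (M ↾ X).Thick d

/-- A collection of sets is simple in `M` if its members are pairwise dissimilar,
i.e. distinct members have distinct closures. -/
def SimpleColl (M : Matroid α) (𝒳 : Finset (Set α)) : Prop :=
  ∀ X ∈ 𝒳, ∀ Y ∈ 𝒳, M.closure X = M.closure Y → X = Y

/-- `ε_M(𝒳)`: the maximum size of a subcollection of `𝒳` that is simple in `M`. -/
noncomputable def eps (M : Matroid α) (𝒳 : Finset (Set α)) : ℕ :=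
  sSup {n | ∃ 𝒴 : Finset (Set α), 𝒴 ⊆ 𝒳 ∧ M.SimpleColl 𝒴 ∧ 𝒴.card = n}

/-- `𝒳` is `d`-firm in `M`: every subcollection `𝒳'` with `|𝒳'| > |𝒳|/d` has the same rank
as `𝒳`. -/
def Firm (M : Matroid α) (d : ℕ) (𝒳 : Finset (Set α)) : Prop :=
  ∀ 𝒳' ⊆ 𝒳, 𝒳.card < d * 𝒳'.card → M.rk (⋃₀ ↑𝒳') = M.rk (⋃₀ ↑𝒳)

/-- `ℱ` is a cover of the collection `𝒳` in `M`: every member of `𝒳` is contained in a member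
of `ℱ`. -/
def CoverOf (M : Matroid α) (ℱ 𝒳 : Finset (Set α)) : Prop :=
  (∀ F ∈ ℱ, F ⊆ M.E) ∧ ∀ X ∈ 𝒳, ∃ F ∈ ℱ, X ⊆ F

/-- `ℱ` is a cover of the matroid `M`: every element of `E(M)` lies in a member of `ℱ`. -/
def CoverOfGround (M : Matroid α) (ℱ : Finset (Set α)) : Prop :=
  (∀ F ∈ ℱ, F ⊆ M.E) ∧ M.E ⊆ ⋃₀ ↑ℱ

/-- The weight `wt^d_M(ℱ) = Σ_{F ∈ ℱ} d^{r_M(F)}`. -/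
noncomputable def wt (M : Matroid α) (d : ℕ) (ℱ : Finset (Set α)) : ℕ :=
  ∑ F ∈ ℱ, d ^ M.rk F

/-- `ℱ` is a `d`-minimal cover of the collection `𝒳` in `M`. -/
def MinimalCoverOf (M : Matroid α) (d : ℕ) (ℱ 𝒳 : Finset (Set α)) : Prop :=
  M.CoverOf ℱ 𝒳 ∧ ∀ ℱ' : Finset (Set α), M.CoverOf ℱ' 𝒳 → M.wt d ℱ ≤ M.wt d ℱ'

/-- `ℱ` is a `d`-minimal cover of the matroid `M`. -/
def MinimalCoverOfGround (M : Matroid α) (d : ℕ) (ℱ : Finset (Set α)) : Prop :=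
  M.CoverOfGround ℱ ∧ ∀ ℱ' : Finset (Set α), M.CoverOfGround ℱ' → M.wt d ℱ ≤ M.wt d ℱ'

/-- `τ^d(M)`: the minimum weight of a cover of `M`. -/
noncomputable def tauW (M : Matroid α) (d : ℕ) : ℕ :=
  sInf {n | ∃ ℱ : Finset (Set α), M.CoverOfGround ℱ ∧ M.wt d ℱ = n}

/-- `𝒳` is `d`-scattered in `M`: every member of `𝒳` is `d`-thick in `M`, and
`{cl_M(X) : X ∈ 𝒳}` is a `d`-minimal cover of `𝒳` in `M`. -/
def Scattered (M : Matroid α) (d : ℕ) (𝒳 : Finset (Set α)) : Prop :=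
  (∀ X ∈ 𝒳, M.ThickIn d X) ∧ M.MinimalCoverOf d (𝒳.image M.closure) 𝒳

/-- `(M, 𝒮; L)` is an `(a, q, h, d)`-pyramid, where `h = L.length` and `L` lists the
elements `e_1, …, e_h`. -/
def IsPyramid (M : Matroid α) (𝒮 : Finset (Set α)) (L : List α) (a q d : ℕ) : Prop :=
  L.Nodup ∧ M.Indep {x | x ∈ L} ∧
  𝒮.Nonempty ∧
  (∀ S ∈ 𝒮, S ⊆ M.E ∧ M.rk S = a) ∧
  (∀ S ∈ 𝒮, M.rk (S ∪ {x | x ∈ L}) = M.rk S + M.rk {x | x ∈ L}) ∧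
  (∀ i < L.length, ∀ S ∈ 𝒮, ∃ f : Fin q → Set α,
    (∀ j, f j ∈ 𝒮) ∧
    (∀ j k, j ≠ k →
      (M.contract' {x | x ∈ L.take i}).closure (f j) ≠
        (M.contract' {x | x ∈ L.take i}).closure (f k)) ∧
    (∀ j, (M.contract' {x | x ∈ L.take (i+1)}).closure (f j) =
      (M.contract' {x | x ∈ L.take (i+1)}).closure S)) ∧
  (∀ S ∈ 𝒮, M.ThickIn d S)

/-- `M` is representable over the field `F`. -/
def RepresentableOver (M : Matroid α) (F : Type*) [Field F] : Prop :=
  ∃ (n : ℕ) (φ : α → (Fin n → F)),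
    ∀ I ⊆ M.E, (M.Indep I ↔ LinearIndependent F (fun x : I => φ x))

end Matroid

namespace Matroid

variable {α : Type*} {M : Matroid α} {I J X Y C B : Set α} {d e : ℕ}

private lemma rk_set_nonempty (M : Matroid α) (X : Set α) :
    {n | ∃ I, I ⊆ X ∧ M.Indep I ∧ I.ncard = n}.Nonempty :=
  ⟨0, ∅, empty_subset X, M.empty_indep, by simp⟩

private lemma rk_set_bddAbove (hE : M.E.Finite) (X : Set α) :
    BddAbove {n | ∃ I, I ⊆ X ∧ M.Indep I ∧ I.ncard = n} := by
  refine ⟨M.E.ncard, ?_⟩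
  rintro n ⟨I, _, hI, rfl⟩
  exact Set.ncard_le_ncard hI.subset_ground hE

lemma ncard_le_rk (hE : M.E.Finite) (hI : M.Indep I) (hIX : I ⊆ X) :
    I.ncard ≤ M.rk X :=
  le_csSup (rk_set_bddAbove hE X) ⟨I, hIX, hI, rfl⟩

lemma exists_rk_indep (hE : M.E.Finite) (X : Set α) :
    ∃ I, I ⊆ X ∧ M.Indep I ∧ I.ncard = M.rk X :=
  Nat.sSup_mem (rk_set_nonempty M X) (rk_set_bddAbove hE X)

lemma rk_mono (hE : M.E.Finite) (hXY : X ⊆ Y) : M.rk X ≤ M.rk Y := by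
  refine csSup_le (rk_set_nonempty M X) ?_
  rintro n ⟨I, hIX, hI, rfl⟩
  exact ncard_le_rk hE hI (hIX.trans hXY)

lemma rk_eq_of_basis (hE : M.E.Finite) (hJ : M.IsBasis J X) : M.rk X = J.ncard := by
  refine le_antisymm ?_ (ncard_le_rk hE hJ.indep hJ.subset)
  obtain ⟨I, hIX, hI, hIcard⟩ := exists_rk_indep (M := M) hE X
  obtain ⟨J', hJ', hIJ'⟩ := hI.subset_isBasis_of_subset hIX hJ.subset_ground
  have hJ'fin : J'.Finite := hE.subset hJ'.indep.subset_ground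
  have h1 : I.ncard ≤ J'.ncard := Set.ncard_le_ncard hIJ' hJ'fin
  have h2 : J'.ncard = J.ncard := by
    rw [Set.ncard_def, Set.ncard_def, hJ'.encard_eq_encard hJ]
  omega

lemma rk_indep_eq (hE : M.E.Finite) (hI : M.Indep I) : M.rk I = I.ncard :=
  rk_eq_of_basis hE hI.isBasis_self

lemma rank_eq_ncard_base (hE : M.E.Finite) (hB : M.IsBase B) : M.rank = B.ncard :=
  rk_eq_of_basis hE hB.isBasis_ground

lemma indep_ncard_le_rank (hE : M.E.Finite) (hI : M.Indep I) : I.ncard ≤ M.rank :=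
  ncard_le_rk hE hI hI.subset_ground

lemma rk_closure_le (hE : M.E.Finite) (hX : X ⊆ M.E) (hXfin : X.Finite) :
    M.rk (M.closure X) ≤ X.ncard := by
  obtain ⟨J, hJ⟩ := M.exists_isBasis X hX
  have h1 : M.rk (M.closure X) = J.ncard := rk_eq_of_basis hE hJ.isBasis_closure_right
  rw [h1]
  exact Set.ncard_le_ncard hJ.subset hXfin

@[simp] lemma contract_ground' (M : Matroid α) (C : Set α) :
    (M.contract' C).E = M.E \ C := rfl

lemma contract_indep_iff' (hC : M.Indep C) {J : Set α} :
    (M.contract' C).Indep J ↔ Disjoint J C ∧ M.Indep (J ∪ C) := by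
  have hCE : C ⊆ M.E := hC.subset_ground
  have hXE : M.E \ C ⊆ M✶.E := diff_subset
  have hcon : M.contract' C = (M✶ ↾ (M.E \ C))✶ := rfl
  rw [hcon, dual_indep_iff_exists']
  constructor
  · rintro ⟨hJX, B, hB, hJB⟩
    rw [restrict_ground_eq] at hJX
    rw [isBase_restrict_iff hXE] at hB
    obtain ⟨Bp, hBp, hBeq⟩ := hB.exists_isBase
    have hbas : M✶.IsBasis (Bp ∩ (M.E \ C)) (M.E \ C) := hBeq ▸ hB
    have hdual := (hBp.inter_isBasis_iff_compl_inter_isBasis_dual hXE).mp hbas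
    rw [dual_dual, dual_ground, Set.diff_diff_cancel_left hCE] at hdual
    have hCB : C ⊆ M.E \ Bp := by
      have := hC.eq_of_isBasis hdual
      rw [← this]; exact inter_subset_left
    have hJBp : J ⊆ M.E \ Bp := by
      intro x hx
      refine ⟨(hJX hx).1, fun hxB => ?_⟩
      exact hJB.ne_of_mem hx (hBeq ▸ ⟨hxB, hJX hx⟩) rfl
    have hbase : M.IsBase (M.E \ Bp) := hBp.compl_isBase_of_dual
    refine ⟨?_, hbase.indep.subset (union_subset hJBp hCB)⟩
    exact Set.disjoint_left.mpr fun x hx => (hJX hx).2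
  · rintro ⟨hdisj, hind⟩
    obtain ⟨Bp, hBp, hJCB⟩ := hind.exists_isBase_superset
    have hJX : J ⊆ M.E \ C :=
      fun x hx => ⟨hind.subset_ground (Or.inl hx), fun hxC => hdisj.ne_of_mem hx hxC rfl⟩
    have hCB : C ⊆ Bp := subset_trans subset_union_right hJCB
    have hbas : M.IsBasis (Bp ∩ C) C := by
      rw [Set.inter_eq_self_of_subset_right hCB]
      exact hC.isBasis_self
    have hdual := hBp.compl_inter_isBasis_of_inter_isBasis hbas
    have hbase : (M✶ ↾ (M.E \ C)).IsBase ((M.E \ Bp) ∩ (M.E \ C)) := by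
      rw [isBase_restrict_iff hXE]
      exact hdual
    refine ⟨by rwa [restrict_ground_eq], (M.E \ Bp) ∩ (M.E \ C), hbase, ?_⟩
    refine Set.disjoint_left.mpr fun x hx hmem => ?_
    exact hmem.1.2 (hJCB (Or.inl hx))

lemma contract_rk_add (hE : M.E.Finite) (hC : M.Indep C) (hX : X ⊆ M.E \ C) :
    M.rk (X ∪ C) = (M.contract' C).rk X + C.ncard := by
  have hE2 : (M.contract' C).E.Finite := by
    rw [contract_ground']; exact hE.subset diff_subset
  obtain ⟨J, hJ⟩ := (M.contract' C).exists_isBasis X (by rwa [contract_ground'])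
  have hrk2 : (M.contract' C).rk X = J.ncard := rk_eq_of_basis hE2 hJ
  obtain ⟨hdisj, hind⟩ := (contract_indep_iff' hC).mp hJ.indep
  have hJfin : J.Finite := hE.subset (fun x hx => hind.subset_ground (Or.inl hx))
  have hCfin : C.Finite := hE.subset hC.subset_ground
  have hsub : X ∪ C ⊆ M.E := union_subset (hX.trans diff_subset) hC.subset_ground
  have hbasis : M.IsBasis (J ∪ C) (X ∪ C) := by
    rw [isBasis_iff hsub]
    refine ⟨hind, union_subset_union_left C hJ.subset, fun K hK hJCK hKXC => ?_⟩
    refine hJCK.antisymm fun x hxK => ?_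
    by_contra hxJC
    have hxX : x ∈ X := (hKXC hxK).elim id (fun h => absurd (Or.inr h) hxJC)
    have hKi : M.Indep (insert x (J ∪ C)) := hK.subset (insert_subset hxK hJCK)
    have hconI : (M.contract' C).Indep (insert x J) := by
      rw [contract_indep_iff' hC]
      constructor
      · refine Set.disjoint_left.mpr ?_
        rintro y (rfl | hyJ)
        · exact fun h => (hX hxX).2 h
        · exact fun h => hdisj.ne_of_mem hyJ h rfl
      · rwa [Set.insert_union]
    exact hxJC (Or.inl (hJ.mem_of_insert_indep hxX hconI))
  rw [rk_eq_of_basis hE hbasis, hrk2, Set.ncard_union_eq hdisj hJfin hCfin]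

lemma contract_rank_add (hE : M.E.Finite) (hC : M.Indep C) :
    M.rank = (M.contract' C).rank + C.ncard := by
  have h := contract_rk_add hE hC (X := M.E \ C) subset_rfl
  rw [Set.diff_union_of_subset hC.subset_ground] at h
  rw [rank, rank, h, contract_ground']

lemma thick_contract (hE : M.E.Finite) (hC : M.Indep C) (hd : M.Thick d)
    (hCr : C.ncard < M.rank) : (M.contract' C).Thick d := by
  intro 𝒞 h1 h2
  rcases Finset.eq_empty_or_nonempty 𝒞 with rfl | hne
  · exfalso
    simp only [Finset.coe_empty, Set.sUnion_empty, Set.subset_empty_iff,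
      contract_ground'] at h2
    have hEC : M.E ⊆ C := fun x hx => by
      by_contra hxC
      exact absurd (Set.eq_empty_iff_forall_notMem.mp h2 x ⟨hx, hxC⟩) id
    have : M.rank ≤ C.ncard := by
      rw [rank, ← rk_indep_eq hE hC]
      exact rk_mono hE hEC
    omega
  refine le_trans (hd (𝒞.image (· ∪ C)) ?_ ?_) Finset.card_image_le
  · intro Y hY
    obtain ⟨X, hX, rfl⟩ := Finset.mem_image.mp hY
    obtain ⟨hXE, hXrk⟩ := h1 X hX
    rw [contract_ground'] at hXE
    constructor
    · exact union_subset (hXE.trans diff_subset) hC.subset_ground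
    · rw [contract_rk_add hE hC hXE]
      have := contract_rank_add hE hC
      omega
  · intro x hx
    rcases Classical.em (x ∈ C) with hxC | hxC
    · obtain ⟨X, hX⟩ := hne
      exact ⟨X ∪ C, by simpa using ⟨X, hX, rfl⟩, Or.inr hxC⟩
    · obtain ⟨T, hT, hxT⟩ := h2 (by rw [contract_ground']; exact ⟨hx, hxC⟩)
      rw [Finset.mem_coe] at hT
      exact ⟨T ∪ C, by simpa using ⟨T, hT, rfl⟩, Or.inl hxT⟩

lemma exists_unif_set (a b : ℕ) (ha : 1 ≤ a) (hab : a < b) (hE : M.E.Finite)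
    (hthick : M.Thick (b.choose a)) (hrank : M.rank = a + 1) :
    ∃ X : Set α, X ⊆ M.E ∧ X.ncard = b ∧ ∀ S ⊆ X, S.ncard ≤ a + 1 → M.Indep S := by
  classical
  set Ef := hE.toFinset with hEf
  set fam : Finset (Finset α) :=
    Ef.powerset.filter (fun Y => ∀ S : Set α, S ⊆ ↑Y → S.ncard ≤ a + 1 → M.Indep S) with hfam
  obtain ⟨B, hB⟩ := M.exists_isBase
  have hBfin : B.Finite := hE.subset hB.subset_ground
  have hBmem : hBfin.toFinset ∈ fam := by
    rw [hfam, Finset.mem_filter, Finset.mem_powerset]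
    constructor
    · intro x hx
      rw [Set.Finite.mem_toFinset] at hx
      rw [hEf, Set.Finite.mem_toFinset]
      exact hB.subset_ground hx
    · intro S hS _
      rw [Set.Finite.coe_toFinset] at hS
      exact hB.indep.subset hS
  obtain ⟨X, hXfam, hXmax⟩ := Finset.exists_max_image fam Finset.card ⟨_, hBmem⟩
  rw [hfam, Finset.mem_filter, Finset.mem_powerset] at hXfam
  obtain ⟨hXEf, hXgp⟩ := hXfam
  have hXE : ↑X ⊆ M.E := fun x hx => by
    have := hXEf hx; rwa [hEf, Set.Finite.mem_toFinset] at this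
  have hBcard : hBfin.toFinset.card = a + 1 := by
    rw [← Set.ncard_eq_toFinset_card B hBfin, ← rank_eq_ncard_base hE hB, hrank]
  have hXa : a + 1 ≤ X.card := by
    have := hXmax _ hBmem
    omega
  rcases le_or_gt b X.card with hbX | hbX
  · obtain ⟨X', hX'X, hX'card⟩ := Finset.exists_subset_card_eq (s := X) hbX
    refine ⟨↑X', fun x hx => hXE (hX'X hx), by rw [Set.ncard_coe_finset, hX'card], ?_⟩
    intro S hS hScard
    exact hXgp S (hS.trans fun x hx => hX'X hx) hScard
  · exfalso
    set 𝒞 : Finset (Set α) := (X.powersetCard a).image (fun A : Finset α => M.closure ↑A)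
      with h𝒞
    have hcov := hthick 𝒞 ?_ ?_
    · have hcard : 𝒞.card ≤ X.card.choose a := by
        rw [h𝒞]
        exact le_trans Finset.card_image_le (le_of_eq (Finset.card_powersetCard a X))
      have hlt : X.card.choose a < b.choose a := by
        obtain ⟨a', rfl⟩ : ∃ a', a = a' + 1 := ⟨a - 1, by omega⟩
        obtain ⟨b', rfl⟩ : ∃ b', b = b' + 1 := ⟨b - 1, by omega⟩
        have h1 : X.card.choose (a' + 1) ≤ b'.choose (a' + 1) :=
          Nat.choose_le_choose _ (by omega)
        have h2 : (b' + 1).choose (a' + 1) = b'.choose a' + b'.choose (a' + 1) :=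
          Nat.choose_succ_succ b' a'
        have h3 : 0 < b'.choose a' := Nat.choose_pos (by omega)
        omega
      omega
    · -- each member is a subset of E with small rank
      intro Y hY
      rw [h𝒞, Finset.mem_image] at hY
      obtain ⟨A, hA, rfl⟩ := hY
      rw [Finset.mem_powersetCard] at hA
      have hAE : ↑A ⊆ M.E := fun x hx => hXE (hA.1 hx)
      refine ⟨M.closure_subset_ground ↑A, ?_⟩
      have := rk_closure_le hE hAE (A.finite_toSet)
      rw [Set.ncard_coe_finset, hA.2] at this
      omega
    · -- coverage
      intro x hx
      have haX : a ≤ X.card := by omega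
      have key : ∃ A ∈ X.powersetCard a, x ∈ M.closure ↑A := by
        rcases Classical.em (x ∈ X) with hxX | hxX
        · obtain ⟨A, hsub, hAX, hAcard⟩ :=
            Finset.exists_subsuperset_card_eq (Finset.singleton_subset_iff.mpr hxX)
              (by simpa using ha) haX
          refine ⟨A, Finset.mem_powersetCard.mpr ⟨hAX, hAcard⟩, ?_⟩
          exact M.subset_closure ↑A (fun y hy => hXE (hAX hy))
            (by simpa using hsub (Finset.mem_singleton_self x))
        · have hnot : insert x X ∉ fam := by
            intro hmem
            have := hXmax _ hmem
            rw [Finset.card_insert_of_notMem hxX] at this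
            omega
          rw [hfam, Finset.mem_filter, Finset.mem_powerset] at hnot
          push_neg at hnot
          have hsubEf : insert x X ⊆ Ef := by
            intro y hy
            rcases Finset.mem_insert.mp hy with rfl | hyX
            · rwa [hEf, Set.Finite.mem_toFinset]
            · exact hXEf hyX
          obtain ⟨S, hS, hScard, hSdep⟩ := hnot hsubEf
          rw [Finset.coe_insert] at hS
          have hxS : x ∈ S := by
            by_contra hxS
            exact hSdep (hXgp S (fun y hy => ((hS hy).resolve_left
              (fun h => hxS (h ▸ hy)))) hScard)
          have hSfin : S.Finite := (hE.subset (fun y hy =>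
            ((hS hy).elim (fun h => h ▸ hx) (fun h => hXE h)))).subset subset_rfl
          set S₀ : Set α := S \ {x} with hS₀
          have hS₀X : S₀ ⊆ ↑X := by
            rintro y ⟨hyS, hyx⟩
            exact (hS hyS).resolve_left (by simpa using hyx)
          have hS₀fin : S₀.Finite := hSfin.subset diff_subset
          have hS₀card : S₀.ncard ≤ a := by
            have := Set.ncard_diff_singleton_add_one hxS hSfin
            rw [← hS₀] at this
            omega
          have hS₀ind : M.Indep S₀ := hXgp S₀ hS₀X (by omega)
          have hxcl : x ∈ M.closure S₀ := by
            rw [hS₀ind.mem_closure_iff]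
            left
            rw [hS₀, Set.insert_diff_singleton, Set.insert_eq_self.mpr hxS]
            exact ⟨hSdep, fun y hy => (hS hy).elim (fun h => h ▸ hx) (fun h => hXE h)⟩
          obtain ⟨A, hsub, hAX, hAcard⟩ :=
            Finset.exists_subsuperset_card_eq
              (t := X) (s := hS₀fin.toFinset)
              (fun y hy => by
                rw [Set.Finite.mem_toFinset] at hy
                have := hS₀X hy; rwa [Finset.mem_coe] at this)
              (by rw [← Set.ncard_eq_toFinset_card S₀ hS₀fin]; exact hS₀card) haX
          refine ⟨A, Finset.mem_powersetCard.mpr ⟨hAX, hAcard⟩, ?_⟩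
          refine M.closure_subset_closure ?_ hxcl
          intro y hy
          have : y ∈ hS₀fin.toFinset := by rwa [Set.Finite.mem_toFinset]
          exact hsub this
      obtain ⟨A, hA, hxA⟩ := key
      refine Set.mem_sUnion.mpr ⟨M.closure ↑A, ?_, hxA⟩
      rw [h𝒞]
      exact Finset.mem_coe.mpr (Finset.mem_image.mpr ⟨A, hA, rfl⟩)

end Matroid

namespace Matroid

/-- If `1 ≤ a < b` and `M` is a finite `C(b,a)`-thick matroid with
`r(M) > a`, then `M` has a minor isomorphic to `U_{a+1,b}`. -/
theorem statement5 {α : Type*} (a b : ℕ) (ha : 1 ≤ a) (hab : a < b)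
    (M : Matroid α) (hM : M.Finite) (hthick : M.Thick (b.choose a)) (hr : a < M.rank) :
    M.HasUnifMinor (a + 1) b := by
  have hE : M.E.Finite := hM.ground_finite
  obtain ⟨B, hB⟩ := M.exists_isBase
  have hBcard : B.ncard = M.rank := (rank_eq_ncard_base hE hB).symm
  obtain ⟨C, hCB, hCcard⟩ := Set.exists_subset_card_eq
    (s := B) (n := M.rank - (a + 1)) (by omega)
  have hC : M.Indep C := hB.indep.subset hCB
  set M₂ := M.contract' C with hM₂
  have hE₂ : M₂.E.Finite := by rw [hM₂, contract_ground']; exact hE.subset diff_subset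
  have hradd : M.rank = M₂.rank + C.ncard := contract_rank_add hE hC
  have hrank₂ : M₂.rank = a + 1 := by omega
  have hthick₂ : M₂.Thick (b.choose a) := thick_contract hE hC hthick (by omega)
  obtain ⟨X, hXE, hXcard, hXgp⟩ := exists_unif_set a b ha hab hE₂ hthick₂ hrank₂
  set D := M₂.E \ X with hD
  have hsetX : M₂.E \ D = X := Set.diff_diff_cancel_left hXE
  have hNE : (M₂.delete' D).E = X := by
    rw [delete', restrict_ground_eq, hsetX]
  refine ⟨M₂.delete' D, ⟨C, D, rfl⟩, ?_, ?_, ?_⟩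
  · rw [hNE]; exact hE₂.subset hXE
  · rw [hNE, hXcard]
  · intro I hI
    rw [hNE] at hI
    have hIndep : (M₂.delete' D).Indep I ↔ M₂.Indep I ∧ I ⊆ X := by
      rw [delete', restrict_indep_iff, hsetX]
    rw [hIndep]
    constructor
    · rintro ⟨h1, _⟩
      have := indep_ncard_le_rank hE₂ h1
      omega
    · intro hcard
      exact ⟨hXgp I hI hcard, hI⟩

end Matroid
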